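/- Ribbon element of Z_q: The element v := Σ_{t ∈ ZMod p} (q^{t·t})⁻¹ • P^t ∈ A is invertible (with inverse Σ_t q^{t·t} • P^t), and with R := Σ_{t,s} q^{t·s} • (P^t ⊗ P^s) it satisfies the ribbon relations R · R = (v ⊗ v) · Δ(v)⁻¹ (note that the flip of R equals R), S(v) = v, and ε(v) = 1. -/
import Mathlib


open scoped TensorProduct

noncomputable section

namespace Stmt13

variable (p : ℕ) [NeZero p] (q : ℂ)

/-- The group Hopf algebra of `ℤ/pℤ` over `ℂ` (the modular Hopf algebra `Z_q`). -/
abbrev Aq := AddMonoidAlgebra ℂ (ZMod p)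

/-- The basis element `h^m` of `Z_q`. -/
def hgen (m : ZMod p) : Aq p := AddMonoidAlgebra.single m 1

/-- The characteristic projector `P^t = p⁻¹ Σ_m q^{-tm} h^m`. -/
def Pproj (t : ZMod p) : Aq p :=
  (p : ℂ)⁻¹ • ∑ m : ZMod p, (q ^ (t.val * m.val))⁻¹ • hgen p m

/-- The `R`-matrix `R = Σ_{t,s} q^{ts} P^t ⊗ P^s` of `Z_q`. -/
def Rmat : Aq p ⊗[ℂ] Aq p :=
  ∑ t : ZMod p, ∑ s : ZMod p, q ^ (t.val * s.val) • (Pproj p q t ⊗ₜ[ℂ] Pproj p q s)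
/-- The ribbon element `v = Σ_t q^{-t²} P^t` of `Z_q`. -/
def vrib : Aq p :=
  ∑ t : ZMod p, (q ^ (t.val * t.val))⁻¹ • Pproj p q t

variable {p q}

/-- `ψ x = q ^ x.val`. -/
def psi (q : ℂ) (x : ZMod p) : ℂ := q ^ x.val

lemma hpC : (p : ℂ) ≠ 0 := Nat.cast_ne_zero.2 (NeZero.ne p)

lemma qpow_mod (hq : IsPrimitiveRoot q p) (a : ℕ) : q ^ a = q ^ (a % p) := by
  conv_lhs => rw [← Nat.mod_add_div a p]
  rw [pow_add, pow_mul, hq.pow_eq_one, one_pow, mul_one]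

lemma psi_add (hq : IsPrimitiveRoot q p) (x y : ZMod p) :
    psi q (x + y) = psi q x * psi q y := by
  rw [psi, psi, psi, ← pow_add, ZMod.val_add, ← qpow_mod hq]

lemma psi_zero : psi q (0 : ZMod p) = 1 := by simp [psi]

lemma psi_neg_mul (hq : IsPrimitiveRoot q p) (x : ZMod p) : psi q (-x) * psi q x = 1 := by
  rw [← psi_add hq, neg_add_cancel, psi_zero]

lemma psi_neg (hq : IsPrimitiveRoot q p) (x : ZMod p) : psi q (-x) = (psi q x)⁻¹ :=
  eq_inv_of_mul_eq_one_left (psi_neg_mul hq x)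

lemma qpow_val_mul (hq : IsPrimitiveRoot q p) (t m : ZMod p) :
    q ^ (t.val * m.val) = psi q (t * m) := by
  rw [psi, ZMod.val_mul, ← qpow_mod hq]

lemma psi_sum (hq : IsPrimitiveRoot q p) (c : ZMod p) :
    ∑ m : ZMod p, psi q (c * m) = if c = 0 then (p : ℂ) else 0 := by
  have hterm : ∀ m : ZMod p, psi q (c * m) = (q ^ c.val) ^ m.val := fun m => by
    rw [psi, ZMod.val_mul, ← qpow_mod hq, pow_mul]
  simp only [hterm]
  have hsum : ∑ m : ZMod p, (q ^ c.val) ^ m.val = ∑ i ∈ Finset.range p, (q ^ c.val) ^ i := by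
    obtain ⟨k, hk⟩ := Nat.exists_eq_succ_of_ne_zero (NeZero.ne p)
    subst hk
    exact Fin.sum_univ_eq_sum_range (fun i => (q ^ c.val) ^ i) (k+1)
  rw [hsum]
  rcases eq_or_ne c 0 with h | h
  · simp [h, ZMod.val_zero]
  · rw [if_neg h]
    have h1 : q ^ c.val ≠ 1 := by
      intro h1
      have := (hq.pow_eq_one_iff_dvd c.val).mp h1
      have hlt : c.val < p := ZMod.val_lt c
      have hne : c.val ≠ 0 := fun h0 => h (by rwa [ZMod.val_eq_zero] at h0)
      exact absurd (Nat.le_of_dvd (Nat.pos_of_ne_zero hne) this) (not_le.2 hlt)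
    rw [geom_sum_eq h1, ← pow_mul, mul_comm, pow_mul, hq.pow_eq_one, one_pow,
      sub_self, zero_div]

lemma Pproj_eq (hq : IsPrimitiveRoot q p) (t : ZMod p) :
    Pproj p q t = (p : ℂ)⁻¹ • ∑ m : ZMod p, psi q (-(t * m)) • hgen p m := by
  rw [Pproj]
  congr 1
  refine Finset.sum_congr rfl fun m _ => ?_
  rw [qpow_val_mul hq, ← psi_neg hq]

lemma hgen_mul (m n : ZMod p) : hgen p m * hgen p n = hgen p (m + n) := by
  simp [hgen, AddMonoidAlgebra.single_mul_single]

lemma hgen_zero : hgen p (0 : ZMod p) = (1 : Aq p) := AddMonoidAlgebra.one_def.symm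

lemma hgen_mul_P (hq : IsPrimitiveRoot q p) (m t : ZMod p) :
    hgen p m * Pproj p q t = psi q (t * m) • Pproj p q t := by
  rw [Pproj_eq hq, mul_smul_comm, smul_smul, mul_comm (psi q (t*m)), ← smul_smul]
  congr 1
  rw [Finset.mul_sum, Finset.smul_sum]
  refine Fintype.sum_equiv (Equiv.addLeft m) _ _ fun n => ?_
  simp only [Equiv.coe_addLeft]
  rw [mul_smul_comm, hgen_mul, smul_smul, ← psi_add hq]
  congr 2
  ring

lemma P_mul_P (hq : IsPrimitiveRoot q p) (t s : ZMod p) :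
    Pproj p q t * Pproj p q s = if t = s then Pproj p q t else 0 := by
  nth_rw 1 [Pproj_eq hq]
  rw [smul_mul_assoc, Finset.sum_mul]
  have h1 : ∀ m : ZMod p, (psi q (-(t*m)) • hgen p m) * Pproj p q s
      = psi q ((s - t) * m) • Pproj p q s := fun m => by
    rw [smul_mul_assoc, hgen_mul_P hq, smul_smul, ← psi_add hq]
    congr 2
    ring
  simp only [h1, ← Finset.sum_smul, psi_sum hq, sub_eq_zero]
  rcases eq_or_ne t s with h | h
  · rw [if_pos h.symm, if_pos h, smul_smul, inv_mul_cancel₀ hpC, one_smul, h]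
  · rw [if_neg (Ne.symm h), if_neg h, zero_smul, smul_zero]

lemma sum_P (hq : IsPrimitiveRoot q p) : ∑ t : ZMod p, Pproj p q t = 1 := by
  have h1 : ∀ t : ZMod p, Pproj p q t
      = (p:ℂ)⁻¹ • ∑ m : ZMod p, psi q ((-m) * t) • hgen p m := fun t => by
    rw [Pproj_eq hq]
    congr 1
    refine Finset.sum_congr rfl fun m _ => ?_
    congr 2
    ring
  simp only [h1, ← Finset.smul_sum]
  rw [Finset.sum_comm]
  simp only [← Finset.sum_smul, psi_sum hq, neg_eq_zero, ite_smul, zero_smul]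
  rw [Finset.sum_ite_eq', if_pos (Finset.mem_univ 0), smul_smul, inv_mul_cancel₀ hpC,
    one_smul, hgen_zero]

lemma hgen_eq (hq : IsPrimitiveRoot q p) (m : ZMod p) :
    ∑ t : ZMod p, psi q (t * m) • Pproj p q t = hgen p m := by
  have h1 : ∀ t : ZMod p, psi q (t * m) • Pproj p q t
      = (p:ℂ)⁻¹ • ∑ n : ZMod p, psi q ((m - n) * t) • hgen p n := fun t => by
    rw [Pproj_eq hq, smul_comm]
    congr 1
    rw [Finset.smul_sum]
    refine Finset.sum_congr rfl fun n _ => ?_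
    rw [smul_smul, ← psi_add hq]
    congr 2
    ring
  simp only [h1, ← Finset.smul_sum]
  rw [Finset.sum_comm]
  simp only [← Finset.sum_smul, psi_sum hq, sub_eq_zero, ite_smul, zero_smul]
  rw [Finset.sum_ite_eq, if_pos (Finset.mem_univ m), smul_smul, inv_mul_cancel₀ hpC,
    one_smul]

lemma sum_mul_sum_ortho {B : Type*} [Ring B] [Algebra ℂ B] {ι : Type*} [Fintype ι]
    [DecidableEq ι] (e : ι → B) (he : ∀ i j, e i * e j = if i = j then e i else 0)
    (f g : ι → ℂ) :
    (∑ i, f i • e i) * (∑ i, g i • e i) = ∑ i, (f i * g i) • e i := by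
  rw [Finset.sum_mul_sum]
  refine Finset.sum_congr rfl fun i _ => ?_
  have h1 : ∀ j, (f i • e i) * (g j • e j) = if i = j then (f i * g j) • e i else 0 :=
    fun j => by
      rw [smul_mul_assoc, mul_smul_comm, he i j, smul_smul]
      split_ifs <;> simp
  simp only [h1]
  rw [Finset.sum_ite_eq, if_pos (Finset.mem_univ i)]


/-- Tensor basis of projectors. -/
def Epr (p : ℕ) [NeZero p] (q : ℂ) (x : ZMod p × ZMod p) : Aq p ⊗[ℂ] Aq p :=
  Pproj p q x.1 ⊗ₜ[ℂ] Pproj p q x.2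

lemma E_ortho (hq : IsPrimitiveRoot q p) (x y : ZMod p × ZMod p) :
    Epr p q x * Epr p q y = if x = y then Epr p q x else 0 := by
  simp only [Epr]
  rw [Algebra.TensorProduct.tmul_mul_tmul, P_mul_P hq, P_mul_P hq]
  rcases eq_or_ne x y with h | h
  · simp [h]
  · rw [if_neg h]
    have : ¬(x.1 = y.1 ∧ x.2 = y.2) := fun ⟨h1, h2⟩ => h (Prod.ext h1 h2)
    split_ifs with h1 h2
    · exact absurd ⟨h1, h2⟩ this
    · exact TensorProduct.tmul_zero _ _
    · exact TensorProduct.zero_tmul _ _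
    · exact TensorProduct.zero_tmul _ _

lemma one_E (hq : IsPrimitiveRoot q p) :
    (1 : Aq p ⊗[ℂ] Aq p) = ∑ x : ZMod p × ZMod p, Epr p q x := by
  rw [Algebra.TensorProduct.one_def, ← sum_P hq, TensorProduct.sum_tmul,
    Fintype.sum_prod_type]
  refine Finset.sum_congr rfl fun a _ => ?_
  rw [TensorProduct.tmul_sum]
  simp only [Epr]

lemma tmul_hgen (hq : IsPrimitiveRoot q p) (m : ZMod p) :
    hgen p m ⊗ₜ[ℂ] hgen p m
      = ∑ x : ZMod p × ZMod p, psi q ((x.1 + x.2) * m) • Epr p q x := by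
  rw [← hgen_eq hq m, TensorProduct.sum_tmul, Fintype.sum_prod_type]
  refine Finset.sum_congr rfl fun a _ => ?_
  rw [TensorProduct.tmul_sum]
  refine Finset.sum_congr rfl fun b _ => ?_
  rw [TensorProduct.tmul_smul, ← TensorProduct.smul_tmul', smul_smul, ← psi_add hq]
  simp only [Epr]
  congr 2
  ring

lemma vrib_eq (hq : IsPrimitiveRoot q p) :
    vrib p q = ∑ t : ZMod p, psi q (-(t * t)) • Pproj p q t := by
  rw [vrib]
  refine Finset.sum_congr rfl fun t _ => ?_
  rw [qpow_val_mul hq, ← psi_neg hq]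

lemma Rmat_eq (hq : IsPrimitiveRoot q p) :
    Rmat p q = ∑ x : ZMod p × ZMod p, psi q (x.1 * x.2) • Epr p q x := by
  rw [Rmat, Fintype.sum_prod_type]
  refine Finset.sum_congr rfl fun t _ => Finset.sum_congr rfl fun s _ => ?_
  rw [qpow_val_mul hq]
  simp only [Epr]


lemma Delta_P (hq : IsPrimitiveRoot q p) (Δ : Aq p →ₐ[ℂ] Aq p ⊗[ℂ] Aq p)
    (hΔ : ∀ m : ZMod p, Δ (hgen p m) = hgen p m ⊗ₜ[ℂ] hgen p m) (t : ZMod p) :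
    Δ (Pproj p q t)
      = ∑ x : ZMod p × ZMod p, (if x.1 + x.2 = t then (1:ℂ) else 0) • Epr p q x := by
  rw [Pproj_eq hq, map_smul, map_sum]
  simp only [map_smul, hΔ, tmul_hgen hq]
  simp only [Finset.smul_sum, smul_smul, ← psi_add hq]
  rw [Finset.sum_comm]
  have h1 : ∀ x : ZMod p × ZMod p, ∀ m : ZMod p,
      psi q (-(t * m) + (x.1 + x.2) * m) = psi q (((x.1 + x.2) - t) * m) := fun x m => by
    congr 1
    ring
  simp only [h1, ← Finset.sum_smul]
  refine Finset.sum_congr rfl fun x _ => ?_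
  rw [← Finset.mul_sum, psi_sum hq]
  rcases eq_or_ne (x.1 + x.2) t with h | h
  · rw [if_pos (sub_eq_zero.2 h), if_pos h, inv_mul_cancel₀ hpC]
  · rw [if_neg (fun hc => h (sub_eq_zero.1 hc)), if_neg h, mul_zero]

lemma Delta_v (hq : IsPrimitiveRoot q p) (Δ : Aq p →ₐ[ℂ] Aq p ⊗[ℂ] Aq p)
    (hΔ : ∀ m : ZMod p, Δ (hgen p m) = hgen p m ⊗ₜ[ℂ] hgen p m) :
    Δ (vrib p q)
      = ∑ x : ZMod p × ZMod p, psi q (-((x.1 + x.2) * (x.1 + x.2))) • Epr p q x := by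
  rw [vrib_eq hq, map_sum]
  simp only [map_smul, Delta_P hq Δ hΔ]
  simp only [Finset.smul_sum, smul_smul, mul_ite, mul_one, mul_zero]
  rw [Finset.sum_comm]
  refine Finset.sum_congr rfl fun x _ => ?_
  simp only [ite_smul, zero_smul]
  rw [Finset.sum_ite_eq, if_pos (Finset.mem_univ _)]

lemma S_P (hq : IsPrimitiveRoot q p) (S : Aq p →ₐ[ℂ] Aq p)
    (hS : ∀ m : ZMod p, S (hgen p m) = hgen p (-m)) (t : ZMod p) :
    S (Pproj p q t) = Pproj p q (-t) := by
  rw [Pproj_eq hq, map_smul, map_sum, Pproj_eq hq]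
  congr 1
  simp only [map_smul, hS]
  refine Fintype.sum_equiv (Equiv.neg (ZMod p)) _ _ fun m => ?_
  simp only [Equiv.neg_apply]
  congr 2
  ring

lemma eps_P (hq : IsPrimitiveRoot q p) (ε : Aq p →ₐ[ℂ] ℂ)
    (hε : ∀ m : ZMod p, ε (hgen p m) = 1) (t : ZMod p) :
    ε (Pproj p q t) = if t = 0 then 1 else 0 := by
  rw [Pproj_eq hq, map_smul, map_sum]
  simp only [map_smul, hε, smul_eq_mul, mul_one]
  have h1 : ∀ m : ZMod p, psi q (-(t * m)) = psi q ((-t) * m) := fun m => by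
    congr 1
    ring
  simp only [h1, psi_sum hq, neg_eq_zero]
  rcases eq_or_ne t 0 with h | h
  · rw [if_pos h, if_pos h, inv_mul_cancel₀ hpC]
  · rw [if_neg h, if_neg h, mul_zero]

variable (p q)

/-- the ribbon element of `Z_q` is invertible (with inverse `Σ_t q^{t²} P^t`) and
satisfies `R·R = (v ⊗ v)·Δ(v)⁻¹` (the flip of `R` equals `R`), `S(v) = v` and `ε(v) = 1`. -/
theorem ribbon (hq : IsPrimitiveRoot q p)
    (Δ : Aq p →ₐ[ℂ] Aq p ⊗[ℂ] Aq p)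
    (hΔ : ∀ m : ZMod p, Δ (hgen p m) = hgen p m ⊗ₜ[ℂ] hgen p m)
    (ε : Aq p →ₐ[ℂ] ℂ) (hε : ∀ m : ZMod p, ε (hgen p m) = 1)
    (S : Aq p →ₐ[ℂ] Aq p) (hS : ∀ m : ZMod p, S (hgen p m) = hgen p (-m)) :
    (vrib p q * (∑ t : ZMod p, q ^ (t.val * t.val) • Pproj p q t) = 1) ∧
      ((∑ t : ZMod p, q ^ (t.val * t.val) • Pproj p q t) * vrib p q = 1) ∧
      (Rmat p q * Rmat p q =
        (vrib p q ⊗ₜ[ℂ] vrib p q) * Ring.inverse (Δ (vrib p q))) ∧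
      (S (vrib p q) = vrib p q) ∧
      (ε (vrib p q) = 1) := by
  have hv' : (∑ t : ZMod p, q ^ (t.val * t.val) • Pproj p q t)
      = ∑ t : ZMod p, psi q (t * t) • Pproj p q t :=
    Finset.sum_congr rfl fun t _ => by rw [qpow_val_mul hq]
  have part1 : vrib p q * (∑ t : ZMod p, q ^ (t.val * t.val) • Pproj p q t) = 1 := by
    rw [vrib_eq hq, hv', sum_mul_sum_ortho _ (P_mul_P hq)]
    simp only [psi_neg_mul hq, one_smul]
    exact sum_P hq
  refine ⟨part1, by rw [mul_comm]; exact part1, ?_, ?_, ?_⟩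
  · -- ribbon relation
    set w : Aq p ⊗[ℂ] Aq p
      := ∑ x : ZMod p × ZMod p, psi q ((x.1 + x.2) * (x.1 + x.2)) • Epr p q x with hw
    have h1 : Δ (vrib p q) * w = 1 := by
      rw [Delta_v hq Δ hΔ, hw, sum_mul_sum_ortho _ (E_ortho hq)]
      simp only [psi_neg_mul hq, one_smul]
      exact (one_E hq).symm
    have h2 : w * Δ (vrib p q) = 1 := by
      rw [Delta_v hq Δ hΔ, hw, sum_mul_sum_ortho _ (E_ortho hq)]
      have : ∀ x : ZMod p × ZMod p,
          psi q ((x.1 + x.2) * (x.1 + x.2)) * psi q (-((x.1 + x.2) * (x.1 + x.2))) = 1 :=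
        fun x => by rw [mul_comm]; exact psi_neg_mul hq _
      simp only [this, one_smul]
      exact (one_E hq).symm
    have hinv : Ring.inverse (Δ (vrib p q)) = w :=
      Ring.inverse_unit ⟨Δ (vrib p q), w, h1, h2⟩
    have hvv : vrib p q ⊗ₜ[ℂ] vrib p q
        = ∑ x : ZMod p × ZMod p,
            (psi q (-(x.2 * x.2)) * psi q (-(x.1 * x.1))) • Epr p q x := by
      rw [vrib_eq hq, TensorProduct.sum_tmul, Fintype.sum_prod_type]
      refine Finset.sum_congr rfl fun a _ => ?_
      rw [TensorProduct.tmul_sum]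
      refine Finset.sum_congr rfl fun b _ => ?_
      rw [TensorProduct.tmul_smul, ← TensorProduct.smul_tmul', smul_smul]
      rfl
    rw [hinv, hvv, hw, Rmat_eq hq, sum_mul_sum_ortho _ (E_ortho hq),
      sum_mul_sum_ortho _ (E_ortho hq)]
    refine Finset.sum_congr rfl fun x _ => ?_
    congr 1
    simp only [← psi_add hq]
    congr 1
    ring
  · -- S v = v
    rw [vrib_eq hq, map_sum]
    simp only [map_smul, S_P hq S hS]
    refine Fintype.sum_equiv (Equiv.neg (ZMod p)) _ _ fun t => ?_
    simp only [Equiv.neg_apply]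
    congr 2
    ring
  · -- ε v = 1
    rw [vrib_eq hq, map_sum]
    simp only [map_smul, eps_P hq ε hε, smul_eq_mul, mul_ite, mul_one, mul_zero]
    rw [Finset.sum_ite_eq', if_pos (Finset.mem_univ 0)]
    simp [psi_zero]


end Stmt13
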